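/- Let n ≥ 4. The transition semigroup of D_n over the alphabet Σ_n (equivalently, the syntactic semigroup of L_n(Σ_n)) is exactly the full non-returning semigroup N_n, and hence has cardinality (n-1)^n. -/
import Mathlib

/-- The rank of a transformation of `Fin n`: the cardinality of its image. -/
def rank {n : ℕ} (t : Fin n → Fin n) : ℕ := (Finset.univ.image t).card

/-- The full non-returning semigroup of degree `n`: all transformations of `Q_n` that
never take the value `0`. -/
def Nn (n : ℕ) : Set (Fin n → Fin n) := {t | ∀ q, (t q).val ≠ 0}

/-- The semigroup generated by `G` under (left-to-right) composition; for the letter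
transformations of a DFA this is its transition semigroup (the transformations induced
by nonempty words). -/
inductive genBy {α : Type} (G : Set (α → α)) : (α → α) → Prop
  | base {t : α → α} : t ∈ G → genBy G t
  | comp {s t : α → α} : genBy G s → genBy G t → genBy G (t ∘ s)


/-- Extend a pair of maps injective on a finset to a permutation matching them. -/
lemma exists_perm_comp {X : Type} [Fintype X] [DecidableEq X] (s : Finset X) (q r : X → X)
    (hq : Set.InjOn q ↑s) (hr : Set.InjOn r ↑s) :
    ∃ σ : Equiv.Perm X, ∀ z ∈ s, σ (q z) = r z := by
  classical
  set A := s.image q with hA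
  set B := s.image r with hB
  have hcard : Aᶜ.card = Bᶜ.card := by
    rw [Finset.card_compl, Finset.card_compl, Finset.card_image_of_injOn hq,
      Finset.card_image_of_injOn hr]
  have e : ↥(Aᶜ) ≃ ↥(Bᶜ) :=
    Fintype.equivOfCardEq (by rw [Fintype.card_coe, Fintype.card_coe, hcard])
  set g : X → X := fun z =>
    if h : ∃ w, w ∈ s ∧ q w = z then r h.choose else (e ⟨z, by
      simp only [Finset.mem_compl, hA, Finset.mem_image]
      push_neg
      intro w hw hqw
      exact h ⟨w, hw, hqw⟩⟩ : ↥(Bᶜ)).val with hg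
  have hmemB : ∀ z (h : ∃ w, w ∈ s ∧ q w = z), r h.choose ∈ B := by
    intro z h
    exact Finset.mem_image_of_mem r h.choose_spec.1
  have hginj : Function.Injective g := by
    intro z1 z2 hz
    simp only [hg] at hz
    split_ifs at hz with h1 h2 h2
    · have := hr h1.choose_spec.1 h2.choose_spec.1 hz
      rw [← h1.choose_spec.2, ← h2.choose_spec.2, this]
    · exact absurd (hz ▸ hmemB z1 h1) (Finset.mem_compl.mp (e _).prop)
    · exact absurd (hz ▸ (Finset.mem_compl.mp (e _).prop)) (by simpa using hmemB z2 h2)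
    · have : (⟨z1, _⟩ : ↥(Aᶜ)) = ⟨z2, _⟩ := e.injective (Subtype.ext hz)
      exact congrArg Subtype.val this
  refine ⟨Equiv.ofBijective g (Finite.injective_iff_bijective.mp hginj), ?_⟩
  intro z hz
  show g (q z) = r z
  have h : ∃ w, w ∈ s ∧ q w = q z := ⟨z, hz, rfl⟩
  simp only [hg, dif_pos h]
  congr 1
  exact hq h.choose_spec.1 hz h.choose_spec.2

lemma gen_full {X : Type} [Fintype X] [DecidableEq X] (M : Set (X → X))
    (hcomp : ∀ {u v : X → X}, u ∈ M → v ∈ M → (v ∘ u) ∈ M)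
    (hperm : ∀ σ : Equiv.Perm X, ⇑σ ∈ M)
    {f : X → X} (hf : f ∈ M) {a b : X} (hab : a ≠ b) (hfab : f a = f b)
    (hinj : Set.InjOn f ↑(Finset.univ.erase b)) :
    ∀ u : X → X, u ∈ M := by
  classical
  -- elementary merges
  have hmerge : ∀ x y : X, x ≠ y → (fun z => if z = x then y else z) ∈ M := by
    intro x y hxy
    set τ₁ := Equiv.swap x a with hτ₁
    set τ₂ := Equiv.swap (τ₁ y) b with hτ₂
    set τ : Equiv.Perm X := τ₂ * τ₁ with hτ
    have hτx : τ x = a := by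
      have h1 : τ₁ x = a := Equiv.swap_apply_left x a
      have hne1 : a ≠ τ₁ y := by
        rw [← h1]; exact fun h => hxy (τ₁.injective h)
      simp [hτ, h1, hτ₂, Equiv.swap_apply_of_ne_of_ne hne1 hab]
    have hτy : τ y = b := by simp [hτ, hτ₂, Equiv.swap_apply_left]
    set q : X → X := f ∘ τ with hqdef
    set r : X → X := fun z => if z = x then y else z with hrdef
    have hqinj : Set.InjOn q ↑(Finset.univ.erase y) := by
      intro z1 hz1 z2 hz2 h
      have hz1' : z1 ≠ y := by simpa [Finset.mem_erase] using hz1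
      have hz2' : z2 ≠ y := by simpa [Finset.mem_erase] using hz2
      have h1 : τ z1 ≠ b := by
        rw [← hτy]; exact fun hh => hz1' (τ.injective hh)
      have h2 : τ z2 ≠ b := by
        rw [← hτy]; exact fun hh => hz2' (τ.injective hh)
      have m1 : τ z1 ∈ (↑(Finset.univ.erase b) : Set X) := by
        simp [Finset.mem_coe, Finset.mem_erase, h1]
      have m2 : τ z2 ∈ (↑(Finset.univ.erase b) : Set X) := by
        simp [Finset.mem_coe, Finset.mem_erase, h2]
      exact τ.injective (hinj m1 m2 h)
    have hrinj : Set.InjOn r ↑(Finset.univ.erase y) := by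
      intro z1 hz1 z2 hz2 h
      have hz1' : z1 ≠ y := by simpa [Finset.mem_erase] using hz1
      have hz2' : z2 ≠ y := by simpa [Finset.mem_erase] using hz2
      simp only [hrdef] at h
      split_ifs at h with e1 e2 e2
      · rw [e1, e2]
      · exact absurd h.symm hz2'
      · exact absurd h hz1'
      · exact h
    obtain ⟨σ, hσ⟩ := exists_perm_comp (Finset.univ.erase y) q r hqinj hrinj
    have hxmem : x ∈ Finset.univ.erase y := by simp only [Finset.mem_erase, Finset.mem_univ, and_true]; exact hxy
    have key : (⇑σ ∘ (f ∘ ⇑τ)) = r := by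
      funext zz
      by_cases hz : zz = y
      · have e1 : f (τ zz) = q x := by
          simp only [hz, hqdef, Function.comp_apply, hτy, hτx, hfab]
        show σ (f (τ zz)) = r zz
        rw [e1, hσ x hxmem]
        simp [hrdef, hz]
      · exact hσ zz (by simp [Finset.mem_erase, hz])
    have hM : (⇑σ ∘ (f ∘ ⇑τ)) ∈ M := hcomp (hcomp (hperm τ) hf) (hperm σ)
    rw [key] at hM
    exact hM
  -- induction on defect
  have main : ∀ k : ℕ, ∀ u : X → X, Fintype.card X - (Finset.univ.image u).card ≤ k → u ∈ M := by
    intro k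
    induction k with
    | zero =>
      intro u hu
      have hle : (Finset.univ.image u).card ≤ Fintype.card X := by
        simpa using Finset.card_le_card (Finset.subset_univ (Finset.univ.image u))
      have hcard : (Finset.univ.image u).card = Fintype.card X := by omega
      have hsurj : Function.Surjective u := by
        intro v
        have he : Finset.univ.image u = Finset.univ :=
          Finset.eq_univ_of_card _ (by simpa using hcard)
        have hv : v ∈ Finset.univ.image u := by rw [he]; exact Finset.mem_univ v
        obtain ⟨z, _, hz⟩ := Finset.mem_image.mp hv
        exact ⟨z, hz⟩
      have hbij : Function.Bijective u := (Finite.surjective_iff_bijective).mp hsurj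
      have : u = ⇑(Equiv.ofBijective u hbij) := rfl
      rw [this]; exact hperm _
    | succ k ih =>
      intro u hu
      by_cases hk : Fintype.card X - (Finset.univ.image u).card ≤ k
      · exact ih u hk
      · have hle : (Finset.univ.image u).card ≤ Fintype.card X := by
          simpa using Finset.card_le_card (Finset.subset_univ (Finset.univ.image u))
        have hlt : (Finset.univ.image u).card < Fintype.card X := by omega
        have hninj : ¬ Function.Injective u := by
          intro hi
          rw [Finset.card_image_of_injective _ hi] at hlt
          simp at hlt
        obtain ⟨x, y, huxy, hxy⟩ := Function.not_injective_iff.mp hninj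
        obtain ⟨w, hw⟩ : ∃ w, w ∉ Finset.univ.image u := by
          by_contra h
          push_neg at h
          have hsub : Finset.univ ⊆ Finset.univ.image u := fun z _ => h z
          have := Finset.card_le_card hsub
          simp at this; omega
        set u' : X → X := fun z => if z = x then w else u z with hu'
        have himg : Finset.univ.image u' = insert w (Finset.univ.image u) := by
          ext v
          simp only [Finset.mem_image, Finset.mem_insert, Finset.mem_univ, true_and]
          constructor
          · rintro ⟨z, hz⟩
            by_cases hzx : z = x
            · left; rw [← hz, hu']; simp [hzx]
            · right
              refine ⟨z, ?_⟩
              rw [← hz]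
              show u z = if z = x then w else u z
              rw [if_neg hzx]
          · rintro (rfl | ⟨z, hz⟩)
            · exact ⟨x, by simp [hu']⟩
            · by_cases hzx : z = x
              · refine ⟨y, ?_⟩
                show (if y = x then w else u y) = v
                rw [if_neg (Ne.symm hxy), ← huxy, ← hzx, hz]
              · refine ⟨z, ?_⟩
                show (if z = x then w else u z) = v
                rw [if_neg hzx, hz]
        have hcard' : (Finset.univ.image u').card = (Finset.univ.image u).card + 1 := by
          rw [himg, Finset.card_insert_of_notMem hw]
        have hu'M : u' ∈ M := ih u' (by omega)
        have hmM := hmerge x y hxy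
        have hcompM := hcomp hmM hu'M
        have heq : (u' ∘ fun z => if z = x then y else z) = u := by
          funext z
          by_cases hzx : z = x
          · show u' (if z = x then y else z) = u z
            rw [if_pos hzx, hzx]
            show (if y = x then w else u y) = u x
            rw [if_neg (Ne.symm hxy)]
            exact huxy.symm
          · show u' (if z = x then y else z) = u z
            rw [if_neg hzx]
            show (if z = x then w else u z) = u z
            rw [if_neg hzx]
        rw [heq] at hcompM
        exact hcompM
  intro u
  exact main (Fintype.card X) u (by omega)

def ExtUp (m : ℕ) (G : Set (Fin (m + 4) → Fin (m + 4))) (u : Fin (m + 3) → Fin (m + 3)) : Prop :=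
  ∃ v, genBy G v ∧ ∀ (q : Fin (m + 4)) (hq : q.val ≠ 0),
    (v q).val = (u ⟨q.val - 1, by have := q.isLt; omega⟩).val + 1

lemma ExtUp.comp {m : ℕ} {G : Set (Fin (m + 4) → Fin (m + 4))} {u u' : Fin (m + 3) → Fin (m + 3)}
    (h1 : ExtUp m G u) (h2 : ExtUp m G u') : ExtUp m G (u' ∘ u) := by
  obtain ⟨v, hv, hvu⟩ := h1
  obtain ⟨v', hv', hvu'⟩ := h2
  refine ⟨v' ∘ v, genBy.comp hv hv', ?_⟩
  intro q hq
  have h1 := hvu q hq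
  have hne : (v q).val ≠ 0 := by omega
  have h2 := hvu' (v q) hne
  show (v' (v q)).val = ((u' (u ⟨q.val - 1, by have := q.isLt; omega⟩))).val + 1
  rw [h2]
  have harg : (⟨(v q).val - 1, by have := (v q).isLt; omega⟩ : Fin (m + 3))
      = u ⟨q.val - 1, by have := q.isLt; omega⟩ := by
    apply Fin.ext
    show (v q).val - 1 = _
    omega
  rw [harg]


def cmap (m : ℕ) : Fin (m + 3) → Fin (m + 3) :=
  fun i => ⟨if i.val = m + 2 then 1 else i.val + 1, by have := i.isLt; split <;> omega⟩

lemma hrotval (m : ℕ) (i : Fin (m + 3)) :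
    ((finRotate (m + 3)) i).val = if i.val = m + 2 then 0 else i.val + 1 := by
  rw [finRotate_succ_apply, Fin.val_add_one]
  by_cases h : i = Fin.last (m + 2)
  · rw [if_pos h, if_pos (by rw [h]; rfl)]
  · rw [if_neg h, if_neg (fun hv => h (Fin.ext (by rw [hv, Fin.val_last])))]

lemma rotExt (m : ℕ) (G : Set (Fin (m + 4) → Fin (m + 4)))
    (va : Fin (m + 4) → Fin (m + 4)) (hvaG : genBy G va)
    (hva : ∀ q : Fin (m + 4), (va q).val = if q.val = m + 4 - 1 then 1 else q.val + 1) :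
    ExtUp m G ⇑(finRotate (m + 3)) := by
  refine ⟨va, hvaG, ?_⟩
  intro q hq
  have hqlt := q.isLt
  rw [hva q, hrotval]
  simp only [Fin.val_mk]
  split_ifs <;> omega

lemma swapExt (m : ℕ) (G : Set (Fin (m + 4) → Fin (m + 4)))
    (vb : Fin (m + 4) → Fin (m + 4)) (hvbG : genBy G vb)
    (hvb : ∀ q : Fin (m + 4), (vb q).val =
      if q.val = 0 then 2 else if q.val = 1 then 2 else if q.val = 2 then 1 else q.val) :
    ExtUp m G ⇑(Equiv.swap (⟨0, by omega⟩ : Fin (m + 3)) ⟨1, by omega⟩) := by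
  have hswapval : ∀ i : Fin (m + 3),
      ((Equiv.swap (⟨0, by omega⟩ : Fin (m + 3)) ⟨1, by omega⟩) i).val =
        if i.val = 0 then 1 else if i.val = 1 then 0 else i.val := by
    intro i
    by_cases e0 : i = ⟨0, by omega⟩
    · rw [e0, Equiv.swap_apply_left, if_pos rfl]
    · by_cases e1 : i = ⟨1, by omega⟩
      · rw [e1, Equiv.swap_apply_right, if_neg (by simp), if_pos rfl]
      · have hv0 : ¬ i.val = 0 := fun hv => e0 (Fin.ext (by rw [hv]))
        have hv1 : ¬ i.val = 1 := fun hv => e1 (Fin.ext (by rw [hv]))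
        rw [Equiv.swap_apply_of_ne_of_ne e0 e1, if_neg hv0, if_neg hv1]
  refine ⟨vb, hvbG, ?_⟩
  intro q hq
  have hqlt := q.isLt
  rw [hvb q, hswapval]
  simp only [Fin.val_mk]
  split_ifs <;> omega

lemma cmapExt (m : ℕ) (G : Set (Fin (m + 4) → Fin (m + 4)))
    (vc : Fin (m + 4) → Fin (m + 4)) (hvcG : genBy G vc)
    (hvc : ∀ q : Fin (m + 4), (vc q).val = if q.val = m + 4 - 1 then 2 else q.val + 1) :
    ExtUp m G (cmap m) := by
  refine ⟨vc, hvcG, ?_⟩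
  intro q hq
  have hqlt := q.isLt
  rw [hvc q]
  show _ = (cmap m ⟨q.val - 1, by omega⟩).val + 1
  simp only [cmap, Fin.val_mk]
  split_ifs <;> omega

lemma permExt (m : ℕ) (G : Set (Fin (m + 4) → Fin (m + 4)))
    (hrot : ExtUp m G ⇑(finRotate (m + 3)))
    (hswap : ExtUp m G ⇑(Equiv.swap (⟨0, by omega⟩ : Fin (m + 3)) ⟨1, by omega⟩)) :
    ∀ σ : Equiv.Perm (Fin (m + 3)), ExtUp m G ⇑σ := by
  have hpow : ∀ (σ : Equiv.Perm (Fin (m + 3))), ExtUp m G ⇑σ →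
      ∀ k : ℕ, ExtUp m G ⇑(σ ^ (k + 1)) := by
    intro σ hσ k
    induction k with
    | zero => rw [pow_one]; exact hσ
    | succ k ih =>
      rw [pow_succ, Equiv.Perm.coe_mul]
      exact ExtUp.comp hσ ih
  have hidExt : ExtUp m G ⇑(1 : Equiv.Perm (Fin (m + 3))) := by
    have hpos : 0 < orderOf (finRotate (m + 3)) := orderOf_pos _
    have h1 := hpow _ hrot (orderOf (finRotate (m + 3)) - 1)
    rw [Nat.sub_add_cancel hpos, pow_orderOf_eq_one] at h1
    exact h1
  have hinvExt : ∀ σ : Equiv.Perm (Fin (m + 3)), ExtUp m G ⇑σ →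
      ExtUp m G ⇑σ⁻¹ := by
    intro σ hσ
    have hpos : 0 < orderOf σ := orderOf_pos _
    rcases Nat.exists_eq_add_of_lt hpos with ⟨k, hk⟩
    have hk' : orderOf σ = k + 1 := by omega
    have h1 : σ ^ k * σ = 1 := by
      rw [← pow_succ, ← hk', pow_orderOf_eq_one]
    have h2 : σ ^ k = σ⁻¹ := eq_inv_of_mul_eq_one_left h1
    rcases Nat.eq_zero_or_pos k with hk0 | hk0
    · rw [← h2, hk0, pow_zero]; exact hidExt
    · rcases Nat.exists_eq_add_of_lt hk0 with ⟨j, hj⟩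
      have hj' : k = j + 1 := by omega
      rw [← h2, hj']
      exact hpow _ hσ j
  set H : Subgroup (Equiv.Perm (Fin (m + 3))) :=
    { carrier := {σ | ExtUp m G ⇑σ}
      mul_mem' := by
        intro σ τ hσ hτ
        show ExtUp m G ⇑(σ * τ)
        rw [Equiv.Perm.coe_mul]
        exact ExtUp.comp hτ hσ
      one_mem' := hidExt
      inv_mem' := by intro σ hσ; exact hinvExt σ hσ } with hH
  have hcyc : (finRotate (m + 3)).IsCycle := isCycle_finRotate_of_le (by omega)
  have hsupp : (finRotate (m + 3)).support = Finset.univ :=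
    support_finRotate_of_le (by omega)
  have hcl := Equiv.Perm.closure_cycle_adjacent_swap hcyc hsupp ⟨0, by omega⟩
  have hrot0 : finRotate (m + 3) ⟨0, by omega⟩ = (⟨1, by omega⟩ : Fin (m + 3)) := by
    apply Fin.ext
    rw [hrotval]
    simp
  have hle : Subgroup.closure
      {finRotate (m + 3), Equiv.swap ⟨0, by omega⟩ (finRotate (m + 3) ⟨0, by omega⟩)} ≤ H := by
    rw [Subgroup.closure_le]
    intro σ hσ
    rcases hσ with rfl | hσ
    · exact hrot
    · rcases hσ with rfl
      rw [hrot0]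
      exact hswap
  intro σ
  have hmem : σ ∈ Subgroup.closure
      {finRotate (m + 3), Equiv.swap ⟨0, by omega⟩ (finRotate (m + 3) ⟨0, by omega⟩)} := by
    rw [hcl]; exact Subgroup.mem_top σ
  exact hle hmem

lemma allExt (m : ℕ) (G : Set (Fin (m + 4) → Fin (m + 4)))
    (hpermExt : ∀ σ : Equiv.Perm (Fin (m + 3)), ExtUp m G ⇑σ)
    (hcmapExt : ExtUp m G (cmap m)) :
    ∀ u : Fin (m + 3) → Fin (m + 3), ExtUp m G u := by
  have hab : (⟨0, by omega⟩ : Fin (m + 3)) ≠ ⟨m + 2, by omega⟩ := by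
    intro h
    have := congrArg Fin.val h
    simp at this
  have hfab : cmap m ⟨0, by omega⟩ = cmap m ⟨m + 2, by omega⟩ := by
    apply Fin.ext
    simp [cmap]
  have hinj : Set.InjOn (cmap m) ↑(Finset.univ.erase (⟨m + 2, by omega⟩ : Fin (m + 3))) := by
    intro z1 hz1 z2 hz2 h
    have hz1' : z1 ≠ ⟨m + 2, by omega⟩ := by simpa [Finset.mem_erase] using hz1
    have hz2' : z2 ≠ ⟨m + 2, by omega⟩ := by simpa [Finset.mem_erase] using hz2
    have hv1 : z1.val ≠ m + 2 := fun hv => hz1' (Fin.ext (by rw [hv]))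
    have hv2 : z2.val ≠ m + 2 := fun hv => hz2' (Fin.ext (by rw [hv]))
    have := congrArg Fin.val h
    simp only [cmap, Fin.val_mk, if_neg hv1, if_neg hv2] at this
    exact Fin.ext (by omega)
  exact gen_full {u | ExtUp m G u}
    (fun hu hv => ExtUp.comp hu hv) hpermExt hcmapExt hab hfab hinj

lemma hardDir (m : ℕ) (δ : {p : Fin (m + 4) × Fin (m + 4) // p.1 < p.2} → Fin (m + 4) → Fin (m + 4))
    (havoid : ∀ x q, (δ x q).val ≠ 0)
    (htype : ∀ x, rank (δ x) = m + 4 - 1 ∧ δ x x.val.1 = δ x x.val.2)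
    (hall : ∀ u : Fin (m + 3) → Fin (m + 3), ExtUp m (Set.range δ) u)
    (t : Fin (m + 4) → Fin (m + 4)) (ht : t ∈ Nn (m + 4)) : genBy (Set.range δ) t := by
  classical
  have hninj : ¬ Function.Injective t := by
    intro hi
    obtain ⟨z, hz⟩ := (Finite.injective_iff_surjective.mp hi) ⟨0, by omega⟩
    exact ht z (by rw [hz])
  obtain ⟨x, y, huxy, hxy⟩ := Function.not_injective_iff.mp hninj
  obtain ⟨i, j, hij, tij⟩ : ∃ i j, i < j ∧ t i = t j := by
    rcases hxy.lt_or_gt with h | h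
    · exact ⟨x, y, h, huxy⟩
    · exact ⟨y, x, h, huxy.symm⟩
  set xij : {p : Fin (m + 4) × Fin (m + 4) // p.1 < p.2} := ⟨(i, j), hij⟩ with hxij
  set w : Fin (m + 4) → Fin (m + 4) := δ xij with hw
  have hwG : genBy (Set.range δ) w := genBy.base ⟨xij, rfl⟩
  have hrank : (Finset.univ.image w).card = m + 3 := (htype xij).1
  have hwij : w i = w j := (htype xij).2
  have hijne : i ≠ j := Fin.ne_of_lt hij
  have himgeq : (Finset.univ.erase j).image w = Finset.univ.image w := by
    apply Finset.Subset.antisymm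
    · exact Finset.image_subset_image (Finset.subset_univ _)
    · intro v hv
      obtain ⟨z, _, hz⟩ := Finset.mem_image.mp hv
      by_cases hzj : z = j
      · exact Finset.mem_image.mpr ⟨i, by simp [Finset.mem_erase, hijne], by
          rw [hwij, ← hzj, hz]⟩
      · exact Finset.mem_image.mpr ⟨z, by simp [Finset.mem_erase, hzj], hz⟩
  have hwinj : Set.InjOn w ↑(Finset.univ.erase j) := by
    apply Finset.injOn_of_card_image_eq
    rw [himgeq, hrank, Finset.card_erase_of_mem (Finset.mem_univ j)]
    simp
  have hker : ∀ z1 z2, w z1 = w z2 → t z1 = t z2 := by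
    intro z1 z2 h
    by_cases e1 : z1 = j <;> by_cases e2 : z2 = j
    · rw [e1, e2]
    · rw [e1] at h ⊢
      rw [hwij.symm] at h
      have : i = z2 := hwinj (by simp [Finset.mem_erase, hijne]) (by simp [Finset.mem_erase, e2]) h
      rw [← this, ← tij]
    · rw [e2] at h ⊢
      rw [hwij.symm] at h
      have : z1 = i := hwinj (by simp [Finset.mem_erase, e1]) (by simp [Finset.mem_erase, hijne]) h
      rw [this, tij]
    · have : z1 = z2 := hwinj (by simp [Finset.mem_erase, e1]) (by simp [Finset.mem_erase, e2]) h
      rw [this]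
  have hsurj : ∀ p : Fin (m + 4), p.val ≠ 0 → ∃ z, w z = p := by
    intro p hp
    have hsub : Finset.univ.image w ⊆ Finset.univ.erase (⟨0, by omega⟩ : Fin (m + 4)) := by
      intro v hv
      obtain ⟨z, _, hz⟩ := Finset.mem_image.mp hv
      simp only [Finset.mem_erase, Finset.mem_univ, and_true]
      intro h0
      exact havoid xij z (by rw [← hw, hz, h0])
    have hcards : (Finset.univ.erase (⟨0, by omega⟩ : Fin (m + 4))).card = m + 3 := by
      rw [Finset.card_erase_of_mem (Finset.mem_univ _)]
      simp
    have heq : Finset.univ.image w = Finset.univ.erase (⟨0, by omega⟩ : Fin (m + 4)) :=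
      Finset.eq_of_subset_of_card_le hsub (by rw [hcards, hrank])
    have hpmem : p ∈ Finset.univ.image w := by
      rw [heq]
      simp only [Finset.mem_erase, Finset.mem_univ, and_true]
      exact fun h0 => hp (by rw [h0])
    obtain ⟨z, _, hz⟩ := Finset.mem_image.mp hpmem
    exact ⟨z, hz⟩
  set winv := Function.invFun w with hwinvdef
  set u : Fin (m + 3) → Fin (m + 3) := fun i2 =>
    ⟨(t (winv ⟨i2.val + 1, by have := i2.isLt; omega⟩)).val - 1,
      by have := (t (winv ⟨i2.val + 1, by have := i2.isLt; omega⟩)).isLt; omega⟩ with hu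
  obtain ⟨v, hvgen, hvu⟩ := hall u
  have hveq : ∀ z, v (w z) = t z := by
    intro z
    have hp : (w z).val ≠ 0 := havoid xij z
    have hplt := (w z).isLt
    have h1 := hvu (w z) hp
    have h2 : (u ⟨(w z).val - 1, by omega⟩).val
        = (t (winv ⟨(w z).val - 1 + 1, by omega⟩)).val - 1 := rfl
    rw [h2] at h1
    have harg : (⟨(w z).val - 1 + 1, by omega⟩ : Fin (m + 4)) = w z := Fin.ext (by
      simp only [Fin.val_mk]; omega)
    rw [harg] at h1
    have hwz : w (winv (w z)) = w z := Function.invFun_eq ⟨z, rfl⟩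
    have htz : t (winv (w z)) = t z := hker _ _ hwz
    rw [htz] at h1
    have htne : (t z).val ≠ 0 := ht z
    exact Fin.ext (by omega)
  have hfin : (v ∘ w) = t := funext hveq
  rw [← hfin]
  exact genBy.comp hwG hvgen

lemma cardNn (m : ℕ) : Nat.card ↥(Nn (m + 4)) = (m + 3) ^ (m + 4) := by
  have e1 : ↥(Nn (m + 4)) ≃ (Fin (m + 4) → {x : Fin (m + 4) // x.val ≠ 0}) :=
    { toFun := fun t q => ⟨t.val q, t.prop q⟩
      invFun := fun f => ⟨fun q => (f q).val, fun q => (f q).prop⟩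
      left_inv := fun t => Subtype.ext (funext fun q => rfl)
      right_inv := fun f => funext fun q => Subtype.ext rfl }
  have e2 : {x : Fin (m + 4) // x.val ≠ 0} ≃ Fin (m + 3) :=
    { toFun := fun x => ⟨x.val.val - 1, by have := x.val.isLt; have := x.prop; omega⟩
      invFun := fun i2 => ⟨⟨i2.val + 1, by have := i2.isLt; omega⟩, by simp⟩
      left_inv := fun x => Subtype.ext (Fin.ext (by
        have := x.prop; simp only [Fin.val_mk]; omega))
      right_inv := fun i2 => Fin.ext (by simp only [Fin.val_mk]; omega) }
  rw [Nat.card_congr e1, Nat.card_fun, Nat.card_congr e2]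
  simp

theorem stmt5 (n : ℕ) (hn : 4 ≤ n)
    (δ : {p : Fin n × Fin n // p.1 < p.2} → Fin n → Fin n)
    (havoid : ∀ x q, (δ x q).val ≠ 0)
    (htype : ∀ x, rank (δ x) = n - 1 ∧ δ x x.val.1 = δ x x.val.2)
    (ha : ∀ x : {p : Fin n × Fin n // p.1 < p.2},
      x.val.1.val = 0 → x.val.2.val = n - 1 →
      ∀ q, (δ x q).val = if q.val = n - 1 then 1 else q.val + 1)
    (hb : ∀ x : {p : Fin n × Fin n // p.1 < p.2},
      x.val.1.val = 0 → x.val.2.val = 1 →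
      ∀ q, (δ x q).val =
        if q.val = 0 then 2 else if q.val = 1 then 2 else if q.val = 2 then 1 else q.val)
    (hc : ∀ x : {p : Fin n × Fin n // p.1 < p.2},
      x.val.1.val = 1 → x.val.2.val = n - 1 →
      ∀ q, (δ x q).val = if q.val = n - 1 then 2 else q.val + 1)
    (hd : ∀ x : {p : Fin n × Fin n // p.1 < p.2},
      x.val.1.val = 0 → x.val.2.val = 2 →
      ∀ q, (δ x q).val = if q.val = 0 then 2 else q.val) :
    {t | genBy (Set.range δ) t} = Nn n ∧
    Nat.card {t | genBy (Set.range δ) t} = (n - 1) ^ n := by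
  classical
  obtain ⟨m, rfl⟩ : ∃ m, n = m + 4 := ⟨n - 4, by omega⟩
  have heasy : ∀ v, genBy (Set.range δ) v → v ∈ Nn (m + 4) := by
    intro v hv
    induction hv with
    | base h => obtain ⟨x, rfl⟩ := h; exact havoid x
    | comp hs ht ihs iht => intro q; exact iht _
  set xa : {p : Fin (m + 4) × Fin (m + 4) // p.1 < p.2} :=
    ⟨(⟨0, by omega⟩, ⟨m + 3, by omega⟩), Fin.mk_lt_mk.mpr (by omega)⟩ with hxa
  set xb : {p : Fin (m + 4) × Fin (m + 4) // p.1 < p.2} :=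
    ⟨(⟨0, by omega⟩, ⟨1, by omega⟩), Fin.mk_lt_mk.mpr (by omega)⟩ with hxb
  set xc : {p : Fin (m + 4) × Fin (m + 4) // p.1 < p.2} :=
    ⟨(⟨1, by omega⟩, ⟨m + 3, by omega⟩), Fin.mk_lt_mk.mpr (by omega)⟩ with hxc
  have hrot := rotExt m (Set.range δ) (δ xa) (genBy.base ⟨xa, rfl⟩) (ha xa rfl rfl)
  have hswap := swapExt m (Set.range δ) (δ xb) (genBy.base ⟨xb, rfl⟩) (hb xb rfl rfl)
  have hcm := cmapExt m (Set.range δ) (δ xc) (genBy.base ⟨xc, rfl⟩) (hc xc rfl rfl)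
  have hperm := permExt m (Set.range δ) hrot hswap
  have hall := allExt m (Set.range δ) hperm hcm
  have hset : {t | genBy (Set.range δ) t} = Nn (m + 4) :=
    Set.ext fun t => ⟨heasy t, hardDir m δ havoid htype hall t⟩
  refine ⟨hset, ?_⟩
  rw [hset]
  exact cardNn m
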